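/- Entropy of an ensemble with orthogonal supports: let ρ_i (i in a finite index set) be n×n density matrices whose supports are pairwise orthogonal, i.e. ρ_i·ρ_j = 0 for i ≠ j, and let p_i ≥ 0 with Σ p_i = 1. Then S(Σ_i p_i ρ_i) = −Σ_i p_i ln p_i + Σ_i p_i S(ρ_i), with the convention 0·ln 0 = 0. -/

import Mathlib

open Matrix Kronecker
open scoped ComplexOrder

noncomputable section

/-- The von Neumann entropy `S(σ) = −Σ λᵢ ln λᵢ` of a Hermitian matrix, computed from its
eigenvalues (with the convention `0·ln 0 = 0`, automatic since `Real.log 0 = 0`);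
set to `0` on non-Hermitian matrices. -/
def vN {n : Type*} [Fintype n] [DecidableEq n] (σ : Matrix n n ℂ) : ℝ :=
  @dite _ σ.IsHermitian (Classical.dec _)
    (fun h => -∑ i, h.eigenvalues i * Real.log (h.eigenvalues i)) (fun _ => 0)

/-- A density matrix: Hermitian positive-semidefinite with trace 1. -/
def IsDensity {n : Type*} [Fintype n] (σ : Matrix n n ℂ) : Prop :=
  σ.PosSemidef ∧ σ.trace = 1

/-- Vandermonde-type lemma: if all power sums (m ≥ 1) of weights on a finite set of
nonzero reals vanish, the weights vanish. -/
lemma vand_zero (u : Finset ℝ) (h0 : (0:ℝ) ∉ u) (c : ℝ → ℝ)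
    (hm : ∀ m : ℕ, 1 ≤ m → ∑ x ∈ u, c x * x ^ m = 0) : ∀ x ∈ u, c x = 0 := by
  classical
  set r := Fintype.card ↥u with hr
  let E : Fin r ≃ ↥u := (Fintype.equivFin ↥u).symm
  let e : Fin r → ℝ := fun i => (E i : ℝ)
  have he : ∀ i, e i ∈ u := fun i => (E i).2
  have hinj : Function.Injective e := by
    intro i j hij
    exact E.injective (Subtype.ext hij)
  let N : Matrix (Fin r) (Fin r) ℝ := Matrix.of fun i j => e i ^ ((j:ℕ)+1)
  have hN : N = Matrix.diagonal e * Matrix.vandermonde e := by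
    ext i j
    simp [N, Matrix.diagonal_mul, Matrix.vandermonde, pow_succ']
  have hdet : N.det ≠ 0 := by
    rw [hN, Matrix.det_mul, Matrix.det_diagonal]
    refine mul_ne_zero ?_ (Matrix.det_vandermonde_ne_zero_iff.mpr hinj)
    rw [Finset.prod_ne_zero_iff]
    intro i _
    intro h
    exact h0 (h ▸ he i)
  have hsumeq : ∀ g : ℝ → ℝ, ∑ x ∈ u, g x = ∑ i : Fin r, g (e i) := by
    intro g
    rw [← Finset.sum_coe_sort u g]
    exact (Equiv.sum_comp E (fun a : ↥u => g ↑a)).symm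
  have hvec : Matrix.vecMul (fun i => c (e i)) N = 0 := by
    ext j
    have := hm ((j:ℕ)+1) (Nat.le_add_left 1 _)
    rw [hsumeq (fun x => c x * x ^ ((j:ℕ)+1))] at this
    simpa [Matrix.vecMul, dotProduct, N] using this
  have hzero : (fun i => c (e i)) = 0 := by
    have hNinv : N * N⁻¹ = 1 := Matrix.mul_nonsing_inv N (isUnit_iff_ne_zero.mpr hdet)
    calc (fun i => c (e i)) = Matrix.vecMul (fun i => c (e i)) (N * N⁻¹) := by
          rw [hNinv]; simp [Matrix.vecMul_one]
      _ = Matrix.vecMul (Matrix.vecMul (fun i => c (e i)) N) N⁻¹ := by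
          rw [Matrix.vecMul_vecMul]
      _ = 0 := by rw [hvec, Matrix.zero_vecMul]
  intro x hx
  have : e (E.symm ⟨x, hx⟩) = x := by simp [e]
  rw [← this]
  exact congrFun hzero _

/-- If two multisets of reals have the same power sums for all `m ≥ 1`, then the sums of
`f` over them agree for any `f` with `f 0 = 0`. -/
lemma sum_map_eq_of_powsum (s t : Multiset ℝ)
    (hst : ∀ m : ℕ, 1 ≤ m → (s.map (fun x => x ^ m)).sum = (t.map (fun x => x ^ m)).sum)
    (f : ℝ → ℝ) (hf : f 0 = 0) : (s.map f).sum = (t.map f).sum := by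
  classical
  set U : Finset ℝ := (s + t).toFinset with hU
  have hsubs : s.toFinset ⊆ U := by
    intro x hx
    simp only [hU, Multiset.mem_toFinset, Multiset.mem_add] at *
    exact Or.inl hx
  have hsubt : t.toFinset ⊆ U := by
    intro x hx
    simp only [hU, Multiset.mem_toFinset, Multiset.mem_add] at *
    exact Or.inr hx
  have expand : ∀ (w : Multiset ℝ), w.toFinset ⊆ U → ∀ g : ℝ → ℝ,
      (w.map g).sum = ∑ x ∈ U, (w.count x : ℝ) * g x := by
    intro w hw g
    rw [Finset.sum_multiset_map_count]
    rw [Finset.sum_subset hw]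
    · exact Finset.sum_congr rfl fun x _ => by
        rw [nsmul_eq_mul]
    · intro x _ hx
      rw [Multiset.count_eq_zero_of_notMem (by simpa using hx)]
      simp
  set c : ℝ → ℝ := fun x => (s.count x : ℝ) - t.count x with hc
  have hcz : ∀ x ∈ U.erase 0, c x = 0 := by
    apply vand_zero _ (Finset.notMem_erase 0 U)
    intro m hm
    have h1 := hst m hm
    rw [expand s hsubs, expand t hsubt] at h1
    have h2 : ∑ x ∈ U, c x * x ^ m = 0 := by
      simp only [hc, sub_mul]
      rw [Finset.sum_sub_distrib, h1, sub_self]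
    rw [Finset.sum_erase (f := fun x => c x * x ^ m) (a := (0:ℝ)) U (by
      simp [zero_pow (Nat.one_le_iff_ne_zero.mp hm)])]
    exact h2
  have key : ∑ x ∈ U, c x * f x = 0 := by
    rw [← Finset.sum_erase (f := fun x => c x * f x) (a := (0:ℝ)) U (by simp [hf])]
    exact Finset.sum_eq_zero fun x hx => by rw [hcz x hx, zero_mul]
  have := expand s hsubs f
  rw [this, expand t hsubt f, ← sub_eq_zero, ← Finset.sum_sub_distrib]
  simpa only [hc, sub_mul] using key


lemma map_finset_sum_multiset {ι : Type*} (u : Finset ι) (t : ι → Multiset ℝ) (g : ℝ → ℝ) :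
    (((∑ i ∈ u, t i).map g)).sum = ∑ i ∈ u, ((t i).map g).sum := by
  classical
  induction u using Finset.induction with
  | empty => simp
  | insert _ _ h ih => simp [Finset.sum_insert h, ih]

lemma trace_pow_eq {N : ℕ} {A : Matrix (Fin N) (Fin N) ℂ} (hA : A.IsHermitian) (m : ℕ) :
    (A ^ m).trace = ((∑ i, hA.eigenvalues i ^ m : ℝ) : ℂ) := by
  set U : Matrix (Fin N) (Fin N) ℂ := (hA.eigenvectorUnitary : Matrix (Fin N) (Fin N) ℂ) with hU
  have hU1 : star U * U = 1 := (Matrix.mem_unitaryGroup_iff').mp hA.eigenvectorUnitary.2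
  have hU2 : U * star U = 1 := (Matrix.mem_unitaryGroup_iff).mp hA.eigenvectorUnitary.2
  set D : Matrix (Fin N) (Fin N) ℂ := Matrix.diagonal (RCLike.ofReal ∘ hA.eigenvalues) with hD
  have hAm : A ^ m = U * D ^ m * star U := by
    induction m with
    | zero => simp [hU2]
    | succ m ih =>
      calc A ^ (m + 1) = A ^ m * A := pow_succ A m
        _ = (U * D ^ m * star U) * (U * (D * star U)) := by
            rw [ih]
            conv_lhs => rw [hA.spectral_theorem, Unitary.conjStarAlgAut_apply]
            rw [mul_assoc U D (star U)]
        _ = U * D ^ m * ((star U * U) * (D * star U)) := by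
            simp only [mul_assoc]
        _ = U * D ^ (m + 1) * star U := by
            rw [hU1, one_mul, pow_succ]
            simp only [mul_assoc]
  rw [hAm, Matrix.trace_mul_cycle, hU1, Matrix.one_mul, hD,
    Matrix.diagonal_pow, Matrix.trace_diagonal]
  push_cast
  simp [Function.comp]

lemma pow_orth_sum {N k : ℕ} (ρ : Fin k → Matrix (Fin N) (Fin N) ℂ) (c : Fin k → ℂ)
    (horth : ∀ i j, i ≠ j → ρ i * ρ j = 0) (m : ℕ) (hm : 1 ≤ m) :
    (∑ i, c i • ρ i) ^ m = ∑ i, c i ^ m • ρ i ^ m := by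
  induction m, hm using Nat.le_induction with
  | base => simp
  | succ m hm ih =>
    rw [pow_succ, ih, Finset.sum_mul_sum]
    refine Finset.sum_congr rfl fun i _ => ?_
    rw [Finset.sum_eq_single i]
    · rw [smul_mul_smul_comm, ← pow_succ, ← pow_succ]
    · intro j _ hj
      obtain ⟨m', rfl⟩ : ∃ m', m = m' + 1 := ⟨m - 1, (Nat.succ_pred_eq_of_pos hm).symm⟩
      rw [smul_mul_smul_comm, pow_succ (ρ i) m', mul_assoc,
        horth i j fun h => hj (h ▸ rfl), mul_zero, smul_zero]
    · intro h; exact absurd (Finset.mem_univ i) h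

/-- entropy of an ensemble of density matrices with pairwise orthogonal
supports: `S(Σᵢ pᵢ ρᵢ) = −Σᵢ pᵢ ln pᵢ + Σᵢ pᵢ S(ρᵢ)`. -/
theorem stmt10 (n k : ℕ) (ρ : Fin k → Matrix (Fin n) (Fin n) ℂ) (p : Fin k → ℝ)
    (hρ : ∀ i, IsDensity (ρ i))
    (horth : ∀ i j, i ≠ j → ρ i * ρ j = 0)
    (hp : ∀ i, 0 ≤ p i) (hps : ∑ i, p i = 1) :
    vN (∑ i, (p i : ℂ) • ρ i) =
      -∑ i, p i * Real.log (p i) + ∑ i, p i * vN (ρ i) := by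
  classical
  have hherm : ∀ i, (ρ i).IsHermitian := fun i => (hρ i).1.1
  have hA : (∑ i, (p i : ℂ) • ρ i).IsHermitian := by
    show _ᴴ = _
    rw [Matrix.conjTranspose_sum]
    refine Finset.sum_congr rfl fun i _ => ?_
    rw [Matrix.conjTranspose_smul, (hherm i).eq]
    congr 1
    simp [Complex.star_def, Complex.conj_ofReal]
  set μ : ∀ i : Fin k, Fin n → ℝ := fun i => (hherm i).eigenvalues with hμ
  set s : Multiset ℝ := Finset.univ.val.map hA.eigenvalues with hsdef
  set t : Multiset ℝ := ∑ i, Finset.univ.val.map (fun j => p i * μ i j) with htdef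
  have hmaps : ∀ g : ℝ → ℝ, (s.map g).sum = ∑ i, g (hA.eigenvalues i) := by
    intro g; rw [hsdef, Multiset.map_map]; rfl
  have hmapt : ∀ g : ℝ → ℝ, (t.map g).sum = ∑ i, ∑ j, g (p i * μ i j) := by
    intro g
    rw [htdef, map_finset_sum_multiset]
    refine Finset.sum_congr rfl fun i _ => ?_
    rw [Multiset.map_map]; rfl
  have hμsum : ∀ i, ∑ j, μ i j = 1 := by
    intro i
    have h1 := trace_pow_eq (hherm i) 1
    rw [pow_one, (hρ i).2] at h1
    simp only [pow_one] at h1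
    exact_mod_cast h1.symm
  have hpow : ∀ m : ℕ, 1 ≤ m →
      (s.map (fun x => x ^ m)).sum = (t.map (fun x => x ^ m)).sum := by
    intro m hm
    rw [hmaps, hmapt]
    have h1 : ((∑ i, hA.eigenvalues i ^ m : ℝ) : ℂ)
        = ((∑ i, ∑ j, (p i * μ i j) ^ m : ℝ) : ℂ) := by
      rw [← trace_pow_eq hA m, pow_orth_sum ρ (fun i => ((p i : ℂ))) horth m hm,
        Matrix.trace_sum]
      push_cast
      refine Finset.sum_congr rfl fun i _ => ?_
      rw [Matrix.trace_smul, trace_pow_eq (hherm i) m, smul_eq_mul]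
      push_cast
      rw [Finset.mul_sum]
      exact Finset.sum_congr rfl fun j _ => (mul_pow _ _ _).symm
    exact_mod_cast h1
  have hkey := sum_map_eq_of_powsum s t hpow (fun x => x * Real.log x) (by simp)
  rw [hmaps, hmapt] at hkey
  have hvN : ∀ i, vN (ρ i) = -∑ j, μ i j * Real.log (μ i j) := by
    intro i
    rw [vN, dif_pos (hherm i)]
  have hpt : ∀ i j, (p i * μ i j) * Real.log (p i * μ i j)
      = (p i * Real.log (p i)) * μ i j + p i * (μ i j * Real.log (μ i j)) := by
    intro i j
    rcases eq_or_ne (p i) 0 with h | h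
    · simp [h]
    rcases eq_or_ne (μ i j) 0 with h' | h'
    · simp [h']
    rw [Real.log_mul h h']
    ring
  have hrhs : ∑ i, ∑ j, (p i * μ i j) * Real.log (p i * μ i j)
      = ∑ i, (p i * Real.log (p i) - p i * vN (ρ i)) := by
    refine Finset.sum_congr rfl fun i _ => ?_
    rw [Finset.sum_congr rfl fun j _ => hpt i j, Finset.sum_add_distrib,
      ← Finset.mul_sum, ← Finset.mul_sum, hμsum i, hvN i]
    ring
  rw [vN, dif_pos hA, hkey, hrhs]
  rw [Finset.sum_sub_distrib]
  ring
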